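/- Let S and I be weighted automata over a field K and finite alphabet A, with recognized languages L_S, L_I : A* → K. Suppose S is minimal (for every state-weight vector s, L_S,s = 0 implies s = 0, where L_{S,s}(w) = f_Sᵀ M_w^S s), W ⊆ A* is a characterization set for S containing ε, C ⊆ A* contains ε and {M^I_x s₀^I | x ∈ C} spans the state space of I. If L_S(x·u·w) = L_I(x·u·w) for all x ∈ C, u ∈ A^{≤1}, w ∈ W, then L_S = L_I. -/
import Mathlib


open Matrix

/-- The matrix of a word: `M_ε = 1`, `M_{wa} = M_a * M_w`. -/
def stmt17.Mword {K Q A : Type} [Semiring K] [Fintype Q] [DecidableEq Q]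
    (M : A → Matrix Q Q K) (w : List A) : Matrix Q Q K :=
  w.foldl (fun acc a => M a * acc) 1

lemma stmt17.foldl_eq {K Q A : Type} [Semiring K] [Fintype Q] [DecidableEq Q]
    (M : A → Matrix Q Q K) :
    ∀ (w : List A) (init : Matrix Q Q K),
      w.foldl (fun acc a => M a * acc) init = stmt17.Mword M w * init
  | [], init => by
      show init = List.foldl _ 1 [] * init
      rw [List.foldl_nil, one_mul]
  | a :: w, init => by
      rw [List.foldl_cons, stmt17.foldl_eq M w]
      show _ = List.foldl _ _ _ * init
      rw [List.foldl_cons, stmt17.foldl_eq M w, mul_one, mul_assoc]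

lemma stmt17.Mword_cons {K Q A : Type} [Semiring K] [Fintype Q] [DecidableEq Q]
    (M : A → Matrix Q Q K) (a : A) (w : List A) :
    stmt17.Mword M (a :: w) = stmt17.Mword M w * M a := by
  show List.foldl _ _ _ = _
  rw [List.foldl_cons, stmt17.foldl_eq, mul_one]

lemma stmt17.Mword_singleton {K Q A : Type} [Semiring K] [Fintype Q] [DecidableEq Q]
    (M : A → Matrix Q Q K) (a : A) : stmt17.Mword M [a] = M a := by
  show List.foldl _ _ _ = _
  rw [List.foldl_cons, List.foldl_nil, mul_one]

lemma stmt17.Mword_append {K Q A : Type} [Semiring K] [Fintype Q] [DecidableEq Q]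
    (M : A → Matrix Q Q K) (x y : List A) :
    stmt17.Mword M (x ++ y) = stmt17.Mword M y * stmt17.Mword M x := by
  show List.foldl _ _ _ = _
  rw [List.foldl_append, stmt17.foldl_eq]
  rfl

/-- Completeness of the test suite `C · A^{≤1} · W` for weighted
automata: if the minimal specification `S` and the implementation `I` agree on
it, where `W` is a characterization set for `S` and the vectors reached via `C`
span the state space of `I`, then `L_S = L_I`. -/
theorem stmt_17 {K A QS QI : Type} [Field K] [Fintype A]
    [Fintype QS] [DecidableEq QS] [Fintype QI] [DecidableEq QI]
    (MS : A → Matrix QS QS K) (s₀S : QS → K) (fS : QS → K)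
    (MI : A → Matrix QI QI K) (s₀I : QI → K) (fI : QI → K)
    -- S is minimal
    (hmin : ∀ s : QS → K,
      (∀ w : List A, fS ⬝ᵥ (stmt17.Mword MS w).mulVec s = 0) → s = 0)
    -- W is a characterization set for S containing ε
    (W : Set (List A)) (hWε : ([] : List A) ∈ W)
    (hW : ∀ s : QS → K,
      (∀ w ∈ W, fS ⬝ᵥ (stmt17.Mword MS w).mulVec s = 0) →
      ∀ w : List A, fS ⬝ᵥ (stmt17.Mword MS w).mulVec s = 0)
    -- C contains ε and the vectors reached via C span the state space of I
    (C : Set (List A)) (hCε : ([] : List A) ∈ C)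
    (hC : Submodule.span K
      ((fun x : List A => (stmt17.Mword MI x).mulVec s₀I) '' C) = ⊤)
    -- agreement on C · A^{≤1} · W
    (hagree : ∀ x ∈ C, ∀ u : List A, u.length ≤ 1 → ∀ w ∈ W,
      fS ⬝ᵥ (stmt17.Mword MS (x ++ u ++ w)).mulVec s₀S =
        fI ⬝ᵥ (stmt17.Mword MI (x ++ u ++ w)).mulVec s₀I) :
    ∀ v : List A,
      fS ⬝ᵥ (stmt17.Mword MS v).mulVec s₀S =
        fI ⬝ᵥ (stmt17.Mword MI v).mulVec s₀I := by
  -- Key: every implementation vector has a corresponding spec vector agreeing on W and A·W.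
  have key : ∀ t : QI → K, ∃ s : QS → K,
      (∀ w ∈ W, fS ⬝ᵥ (stmt17.Mword MS w).mulVec s
          = fI ⬝ᵥ (stmt17.Mword MI w).mulVec t) ∧
      (∀ a : A, ∀ w ∈ W,
          fS ⬝ᵥ (stmt17.Mword MS w).mulVec ((MS a).mulVec s)
          = fI ⬝ᵥ (stmt17.Mword MI w).mulVec ((MI a).mulVec t)) := by
    intro t
    have ht : t ∈ Submodule.span K
        ((fun x : List A => (stmt17.Mword MI x).mulVec s₀I) '' C) :=
      hC.symm ▸ Submodule.mem_top
    induction ht using Submodule.span_induction with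
    | mem t htmem =>
      obtain ⟨x, hx, rfl⟩ := htmem
      refine ⟨(stmt17.Mword MS x).mulVec s₀S, fun w hw => ?_, fun a w hw => ?_⟩
      · have := hagree x hx [] (by simp) w hw
        simp only [List.append_nil, stmt17.Mword_append,
          ← Matrix.mulVec_mulVec] at this
        exact this
      · have := hagree x hx [a] (by simp) w hw
        simp only [stmt17.Mword_append, stmt17.Mword_singleton,
          ← Matrix.mulVec_mulVec] at this
        exact this
    | zero => exact ⟨0, by simp, by simp⟩
    | add t₁ t₂ _ _ ih₁ ih₂ =>
      obtain ⟨s₁, h₁, h₁'⟩ := ih₁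
      obtain ⟨s₂, h₂, h₂'⟩ := ih₂
      refine ⟨s₁ + s₂, fun w hw => ?_, fun a w hw => ?_⟩
      · simp only [Matrix.mulVec_add, dotProduct_add]
        rw [h₁ w hw, h₂ w hw]
      · simp only [Matrix.mulVec_add, dotProduct_add]
        rw [h₁' a w hw, h₂' a w hw]
    | smul c t' _ ih =>
      obtain ⟨s, h, h'⟩ := ih
      refine ⟨c • s, fun w hw => ?_, fun a w hw => ?_⟩
      · simp only [Matrix.mulVec_smul, dotProduct_smul]
        rw [h w hw]
      · simp only [Matrix.mulVec_smul, dotProduct_smul]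
        rw [h' a w hw]
  -- Observational equality on W extends to all words.
  have hWext : ∀ s₁ s₂ : QS → K,
      (∀ w ∈ W, fS ⬝ᵥ (stmt17.Mword MS w).mulVec s₁
        = fS ⬝ᵥ (stmt17.Mword MS w).mulVec s₂) →
      ∀ w : List A, fS ⬝ᵥ (stmt17.Mword MS w).mulVec s₁
        = fS ⬝ᵥ (stmt17.Mword MS w).mulVec s₂ := by
    intro s₁ s₂ h w
    have h0 := hW (s₁ - s₂) (fun w hw => by
      simp [Matrix.mulVec_sub, dotProduct_sub, h w hw]) w
    simpa [Matrix.mulVec_sub, dotProduct_sub, sub_eq_zero] using h0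
  -- Main induction on the word.
  have main : ∀ (v : List A) (t : QI → K) (s : QS → K),
      (∀ w ∈ W, fS ⬝ᵥ (stmt17.Mword MS w).mulVec s
        = fI ⬝ᵥ (stmt17.Mword MI w).mulVec t) →
      fS ⬝ᵥ (stmt17.Mword MS v).mulVec s = fI ⬝ᵥ (stmt17.Mword MI v).mulVec t := by
    intro v
    induction v with
    | nil =>
      intro t s h
      have h0 := h [] hWε
      simpa only [stmt17.Mword, List.foldl_nil, Matrix.one_mulVec] using h0
    | cons a v ih =>
      intro t s h
      rw [stmt17.Mword_cons, stmt17.Mword_cons, ← Matrix.mulVec_mulVec,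
        ← Matrix.mulVec_mulVec]
      refine ih ((MI a).mulVec t) ((MS a).mulVec s) (fun w hw => ?_)
      obtain ⟨s', hs'1, hs'2⟩ := key t
      have hext := hWext s s' (fun w hw => (h w hw).trans (hs'1 w hw).symm)
      calc fS ⬝ᵥ (stmt17.Mword MS w).mulVec ((MS a).mulVec s)
          = fS ⬝ᵥ (stmt17.Mword MS (a :: w)).mulVec s := by
            rw [stmt17.Mword_cons, ← Matrix.mulVec_mulVec]
        _ = fS ⬝ᵥ (stmt17.Mword MS (a :: w)).mulVec s' := hext (a :: w)
        _ = fS ⬝ᵥ (stmt17.Mword MS w).mulVec ((MS a).mulVec s') := by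
            rw [stmt17.Mword_cons, ← Matrix.mulVec_mulVec]
        _ = fI ⬝ᵥ (stmt17.Mword MI w).mulVec ((MI a).mulVec t) := hs'2 a w hw
  intro v
  exact main v s₀I s₀S (fun w hw => by simpa using hagree [] hCε [] (by simp) w hw)
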